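/- (Theorem 8.) For i = 1, 2 the function z ↦ φ_i(z) is differentiable at z = 1, and its derivative at z = 1 equals (−1)^i · [φ_i(1)/(φ₂(1) − φ₁(1))] · [4pq·θ(1) − i₀·(1 + ω^{i₀})/(1 − s) + 2p·((p − q)(1 − ω^{i₀−1}) + (i₀ − 1)(1 + ω^{i₀−1}))] / (p − q)². -/

import Mathlib

noncomputable def thV (p q ω s : ℝ) (i₀ : ℕ) : ℝ :=
  1 + ω ^ i₀ + (ω ^ i₀ - 1) / (p - q) * (s / (1 - s))

noncomputable def EV (p q ω s : ℝ) (i₀ : ℕ) : ℝ :=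
  (4 * p * q * thV p q ω s i₀ - (i₀ : ℝ) * (1 + ω ^ i₀) / (1 - s) +
      2 * p * ((p - q) * (1 - ω ^ (i₀ - 1)) + ((i₀ : ℝ) - 1) * (1 + ω ^ (i₀ - 1)))) /
    (p - q) ^ 2

noncomputable def FF (p q s : ℝ) (i₀ : ℕ) (z : ℝ) : ℝ :=
  ((((1 - Real.sqrt (1 - 4 * p * q * z ^ 2)) / (2 * q * z)) ^ i₀ - ((1 + Real.sqrt (1 - 4 * p * q * z ^ 2)) / (2 * q * z)) ^ i₀) / (1 - s) - 2 * p * z * (((1 - Real.sqrt (1 - 4 * p * q * z ^ 2)) / (2 * q * z)) ^ (i₀ - 1) - ((1 + Real.sqrt (1 - 4 * p * q * z ^ 2)) / (2 * q * z)) ^ (i₀ - 1))) /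
    (q * z * (((1 - Real.sqrt (1 - 4 * p * q * z ^ 2)) / (2 * q * z)) - ((1 + Real.sqrt (1 - 4 * p * q * z ^ 2)) / (2 * q * z))))

set_option maxHeartbeats 4000000 in
lemma key (p q ω s : ℝ) (i₀ : ℕ) (hp : 0 < p) (hp1 : p < 1) (hq : q = 1 - p)
    (hne : p ≠ q) (hω : ω = p / q) (hs : 0 < s) (hs1 : s < 1) (hi : 2 ≤ i₀) :
    FF p q s i₀ 1 = thV p q ω s i₀ ∧ HasDerivAt (FF p q s i₀) (EV p q ω s i₀) 1 := by
  obtain ⟨k, rfl⟩ : ∃ k, i₀ = k + 2 := ⟨i₀ - 2, by omega⟩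
  have hq0 : 0 < q := by rw [hq]; linarith
  have hq0' : q ≠ 0 := ne_of_gt hq0
  have hs1' : (1:ℝ) - s ≠ 0 := by intro h; linarith
  have hpq0 : p - q ≠ 0 := sub_ne_zero.mpr hne
  have hd4 : 1 - 4*p*q = (p-q)^2 := by rw [hq]; ring
  have hdisc : 0 < 1 - 4*p*q := by rw [hd4]; positivity
  have hc0 : 0 < Real.sqrt (1 - 4*p*q) := Real.sqrt_pos.mpr hdisc
  set c := Real.sqrt (1 - 4*p*q) with hcdef
  have hc0' : c ≠ 0 := ne_of_gt hc0
  have hc2 : c ^ 2 = (p-q)^2 := by rw [hcdef, Real.sq_sqrt hdisc.le, hd4]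
  have hccase : c = q - p ∨ c = p - q := by
    have h : (c - (q-p)) * (c - (p-q)) = 0 := by linear_combination hc2
    rcases mul_eq_zero.mp h with h | h
    · left; linarith [sub_eq_zero.mp h]
    · right; linarith [sub_eq_zero.mp h]
  have hv : Real.sqrt (1 - 4*p*q*(1:ℝ)^2) = c := by norm_num; exact hcdef.symm
  have hne1 : (1:ℝ) - 4*p*q*1^2 ≠ 0 := by
    have h : (1:ℝ) - 4*p*q*1^2 = 1 - 4*p*q := by ring
    rw [h]; exact ne_of_gt hdisc
  have hinner : HasDerivAt (fun z : ℝ => 1 - 4*p*q*z^2) (-(8*p*q)) 1 := by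
    have h2 := ((hasDerivAt_pow 2 (1:ℝ)).const_mul (4*p*q)).const_sub 1
    refine h2.congr_deriv (Eq.symm ?_)
    push_cast; ring
  have hR := hinner.sqrt hne1
  have hden2q : (2*q*(1:ℝ)) ≠ 0 := by norm_num [hq0']
  have h2qz : HasDerivAt (fun z : ℝ => 2*q*z) (2*q) 1 := by
    simpa using (hasDerivAt_id (1:ℝ)).const_mul (2*q)
  have h2pz : HasDerivAt (fun z : ℝ => 2*p*z) (2*p) 1 := by
    simpa using (hasDerivAt_id (1:ℝ)).const_mul (2*p)
  have hqz : HasDerivAt (fun z : ℝ => q*z) q 1 := by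
    simpa using (hasDerivAt_id (1:ℝ)).const_mul q
  have hT1 : HasDerivAt (fun y : ℝ => (1 + Real.sqrt (1 - 4*p*q*y^2)) / (2*q*y))
      ((-(4*p*q)/c - (1+c)) / (2*q)) 1 := by
    have h := (hR.const_add 1).div h2qz hden2q
    refine h.congr_deriv (Eq.symm ?_)
    rw [hv]
    field_simp
    ring
  have hT2 : HasDerivAt (fun y : ℝ => (1 - Real.sqrt (1 - 4*p*q*y^2)) / (2*q*y))
      ((4*p*q/c - (1-c)) / (2*q)) 1 := by
    have h := (hR.const_sub 1).div h2qz hden2q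
    refine h.congr_deriv (Eq.symm ?_)
    rw [hv]
    field_simp
    ring
  have hDne : q*1*((1 - Real.sqrt (1-4*p*q*(1:ℝ)^2))/(2*q*1) - (1 + Real.sqrt (1-4*p*q*(1:ℝ)^2))/(2*q*1)) ≠ 0 := by
    have hDv : q*1*((1 - Real.sqrt (1-4*p*q*(1:ℝ)^2))/(2*q*1) - (1 + Real.sqrt (1-4*p*q*(1:ℝ)^2))/(2*q*1)) = -c := by
      rw [hv]; field_simp; ring
    rw [hDv]; exact neg_ne_zero.mpr hc0'
  have hN := (((hT2.pow (k+2)).sub (hT1.pow (k+2))).div_const (1-s)).sub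
    (h2pz.mul ((hT2.pow (k+2-1)).sub (hT1.pow (k+2-1))))
  have hD := hqz.mul (hT2.sub hT1)
  have hF := hN.div hD hDne
  have e1 : (1 + (q - p)) / (2 * q * 1) = 1 := by
    rw [div_eq_one_iff_eq hden2q]; linarith
  have e2 : (1 - (q - p)) / (2 * q * 1) = ω := by
    rw [hω, div_eq_div_iff hden2q hq0']; linear_combination (-q) * hq
  have e1' : (1 + (p - q)) / (2 * q * 1) = ω := by
    rw [hω, div_eq_div_iff hden2q hq0']; linear_combination (-q) * hq
  have e2' : (1 - (p - q)) / (2 * q * 1) = 1 := by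
    rw [div_eq_one_iff_eq hden2q]; linarith
  have ek1 : k + 2 - 1 = k + 1 := by omega
  have ek0 : k + 1 - 1 = k := by omega
  have h1p : (1:ℝ) - p ≠ 0 := by intro h; rw [hq] at hq0'; exact hq0' (by linarith)
  have h2p : p - (1 - p) ≠ 0 := by rw [hq] at hpq0; exact hpq0
  have h2p' : (1:ℝ) - p - p ≠ 0 := by intro hh; exact h2p (by linarith)
  have hP2 : (p/(1-p))^(k+2) = (p/(1-p))^k * (p/(1-p)) * (p/(1-p)) := by ring
  have hP1 : (p/(1-p))^(k+1) = (p/(1-p))^k * (p/(1-p)) := by ring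
  have hval : FF p q s (k+2) 1 = thV p q ω s (k+2) := by
    simp only [FF, thV]
    rw [hv]
    rcases hccase with h | h
    · rw [h, e1, e2]
      simp only [one_pow, ek1]
      rw [hω, hq, hP2, hP1]
      field_simp
      ring
    · rw [h, e1', e2']
      simp only [one_pow, ek1]
      rw [hω, hq, hP2, hP1]
      field_simp
      ring
  refine ⟨hval, ?_⟩
  refine hF.congr_deriv (Eq.symm ?_)
  simp only [Pi.pow_apply, Pi.mul_apply, Pi.sub_apply, Pi.div_apply]
  rw [hv]
  simp only [EV, thV]
  rcases hccase with h | h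
  · rw [h, e1, e2]
    simp only [one_pow, ek1, ek0]
    rw [hω, hq, hP2, hP1]
    push_cast
    field_simp [h1p, h2p, h2p', hs1']
    ring
  · rw [h, e1', e2']
    simp only [one_pow, ek1, ek0]
    rw [hω, hq, hP2, hP1]
    push_cast
    field_simp [h1p, h2p, h2p', hs1']
    ring

set_option maxHeartbeats 1000000 in
/-- Theorem 8 of the paper: the derivatives of `φ₁` and `φ₂` (as functions of
the moment-generating-function variable `z`, on `(0, 1]`) at `z = 1`. -/
theorem theorem8 (p s : ℝ) (i₀ : ℕ)
    (hp : 0 < p) (hp1 : p < 1) (hp2 : p ≠ 1 / 2) (hs : 0 < s) (hs1 : s < 1) (hi₀ : 2 ≤ i₀)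
    (q ω : ℝ) (hq : q = 1 - p) (hω : ω = p / q)
    (τ₁ τ₂ θ φ₁ φ₂ : ℝ → ℝ)
    (hτ₁ : ∀ z ∈ Set.Ioc (0 : ℝ) 1,
      τ₁ z = (1 + Real.sqrt (1 - 4 * p * q * z ^ 2)) / (2 * q * z))
    (hτ₂ : ∀ z ∈ Set.Ioc (0 : ℝ) 1,
      τ₂ z = (1 - Real.sqrt (1 - 4 * p * q * z ^ 2)) / (2 * q * z))
    (hθ : ∀ z ∈ Set.Ioc (0 : ℝ) 1,
      θ z = ((τ₂ z ^ i₀ - τ₁ z ^ i₀) / (1 - s) -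
          2 * p * z * (τ₂ z ^ (i₀ - 1) - τ₁ z ^ (i₀ - 1))) /
        (q * z * (τ₂ z - τ₁ z)))
    (hφ₁ : ∀ z ∈ Set.Ioc (0 : ℝ) 1,
      φ₁ z = (θ z + Real.sqrt (θ z ^ 2 - 4 * ω ^ i₀)) / 2)
    (hφ₂ : ∀ z ∈ Set.Ioc (0 : ℝ) 1,
      φ₂ z = (θ z - Real.sqrt (θ z ^ 2 - 4 * ω ^ i₀)) / 2) :
    HasDerivWithinAt φ₁
      ((-1 : ℝ) ^ (1 : ℕ) * (φ₁ 1 / (φ₂ 1 - φ₁ 1)) *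
        ((4 * p * q * θ 1 - (i₀ : ℝ) * (1 + ω ^ i₀) / (1 - s) +
            2 * p * ((p - q) * (1 - ω ^ (i₀ - 1)) + ((i₀ : ℝ) - 1) * (1 + ω ^ (i₀ - 1)))) /
          (p - q) ^ 2))
      (Set.Ioc (0 : ℝ) 1) 1 ∧
    HasDerivWithinAt φ₂
      ((-1 : ℝ) ^ (2 : ℕ) * (φ₂ 1 / (φ₂ 1 - φ₁ 1)) *
        ((4 * p * q * θ 1 - (i₀ : ℝ) * (1 + ω ^ i₀) / (1 - s) +
            2 * p * ((p - q) * (1 - ω ^ (i₀ - 1)) + ((i₀ : ℝ) - 1) * (1 + ω ^ (i₀ - 1)))) /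
          (p - q) ^ 2))
      (Set.Ioc (0 : ℝ) 1) 1 := by
  have hq0 : 0 < q := by rw [hq]; linarith
  have hq0' : q ≠ 0 := ne_of_gt hq0
  have hne : p ≠ q := by rw [hq]; intro h; apply hp2; linarith
  have hpqne : p - q ≠ 0 := sub_ne_zero.mpr hne
  have hs1' : (1:ℝ) - s ≠ 0 := by intro h; linarith
  have hkey := key p q ω s i₀ hp hp1 hq hne hω hs hs1 hi₀
  have hmem : (1:ℝ) ∈ Set.Ioc (0:ℝ) 1 := by constructor <;> norm_num
  have hθF : ∀ z ∈ Set.Ioc (0:ℝ) 1, θ z = FF p q s i₀ z := by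
    intro z hz
    rw [hθ z hz, hτ₁ z hz, hτ₂ z hz]
    simp only [FF]
  have hθ1 : θ 1 = thV p q ω s i₀ := by rw [hθF 1 hmem, hkey.1]
  have hω0 : 0 < ω := by rw [hω]; positivity
  have hgt : 1 + ω ^ i₀ < thV p q ω s i₀ := by
    have h1 : 0 < (ω ^ i₀ - 1) / (p - q) := by
      rcases lt_or_gt_of_ne hne with h | h
      · have hωlt : ω < 1 := by rw [hω, div_lt_one hq0]; exact h
        have h2 : ω ^ i₀ < 1 := pow_lt_one₀ hω0.le hωlt (by omega)
        exact div_pos_of_neg_of_neg (by linarith) (by linarith)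
      · have hωgt : 1 < ω := by rw [hω, lt_div_iff₀ hq0]; linarith
        have h2 : 1 < ω ^ i₀ := one_lt_pow₀ hωgt (by omega)
        exact div_pos (by linarith) (by linarith)
    have h2 : 0 < s / (1 - s) := div_pos hs (by linarith)
    have h3 := mul_pos h1 h2
    simp only [thV]
    linarith
  have hωi : 0 < ω ^ i₀ := pow_pos hω0 _
  have hD0 : 0 < thV p q ω s i₀ ^ 2 - 4 * ω ^ i₀ := by
    nlinarith [sq_nonneg (1 - ω ^ i₀)]
  have hΔ0 : 0 < Real.sqrt (thV p q ω s i₀ ^ 2 - 4 * ω ^ i₀) := Real.sqrt_pos.mpr hD0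
  have hFne : FF p q s i₀ 1 ^ 2 - 4 * ω ^ i₀ ≠ 0 := by rw [hkey.1]; exact ne_of_gt hD0
  have hin := (hkey.2.pow 2).sub_const (4 * ω ^ i₀)
  have hsq := hin.sqrt hFne
  have hG1 := (hkey.2.add hsq).div_const 2
  have hG2 := (hkey.2.sub hsq).div_const 2
  constructor
  · have heq : Set.EqOn φ₁
        (fun z => (FF p q s i₀ z + Real.sqrt (FF p q s i₀ z ^ 2 - 4 * ω ^ i₀)) / 2)
        (Set.Ioc (0:ℝ) 1) := fun z hz => by
      simp only; rw [hφ₁ z hz, hθF z hz]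
    have h2 := (hG1.hasDerivWithinAt (s := Set.Ioc (0:ℝ) 1)).congr heq (heq hmem)
    refine h2.congr_deriv (Eq.symm ?_)
    have hEVeq : (4 * p * q * θ 1 - (i₀:ℝ) * (1 + ω ^ i₀) / (1 - s) +
        2 * p * ((p - q) * (1 - ω ^ (i₀ - 1)) + ((i₀:ℝ) - 1) * (1 + ω ^ (i₀ - 1)))) / (p - q) ^ 2
        = EV p q ω s i₀ := by rw [hθ1]; rfl
    simp only [Pi.pow_apply]
    rw [hφ₁ 1 hmem, hφ₂ 1 hmem, hEVeq, hθ1, hkey.1]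
    have h2t : ((2:ℕ):ℝ) * thV p q ω s i₀ ^ (2-1) * EV p q ω s i₀
        = 2 * thV p q ω s i₀ * EV p q ω s i₀ := by norm_num
    rw [h2t]
    set t := thV p q ω s i₀ with ht
    set E := EV p q ω s i₀ with hE
    set Δ := Real.sqrt (t ^ 2 - 4 * ω ^ i₀) with hΔ
    norm_num
    have hc : Δ * Δ⁻¹ = 1 := mul_inv_cancel₀ hΔ0.ne'
    field_simp [hΔ0.ne']
    linear_combination (t*E + Δ*E) * hc
  · have heq : Set.EqOn φ₂
        (fun z => (FF p q s i₀ z - Real.sqrt (FF p q s i₀ z ^ 2 - 4 * ω ^ i₀)) / 2)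
        (Set.Ioc (0:ℝ) 1) := fun z hz => by
      simp only; rw [hφ₂ z hz, hθF z hz]
    have h2 := (hG2.hasDerivWithinAt (s := Set.Ioc (0:ℝ) 1)).congr heq (heq hmem)
    refine h2.congr_deriv (Eq.symm ?_)
    have hEVeq : (4 * p * q * θ 1 - (i₀:ℝ) * (1 + ω ^ i₀) / (1 - s) +
        2 * p * ((p - q) * (1 - ω ^ (i₀ - 1)) + ((i₀:ℝ) - 1) * (1 + ω ^ (i₀ - 1)))) / (p - q) ^ 2
        = EV p q ω s i₀ := by rw [hθ1]; rfl
    simp only [Pi.pow_apply]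
    rw [hφ₁ 1 hmem, hφ₂ 1 hmem, hEVeq, hθ1, hkey.1]
    have h2t : ((2:ℕ):ℝ) * thV p q ω s i₀ ^ (2-1) * EV p q ω s i₀
        = 2 * thV p q ω s i₀ * EV p q ω s i₀ := by norm_num
    rw [h2t]
    set t := thV p q ω s i₀ with ht
    set E := EV p q ω s i₀ with hE
    set Δ := Real.sqrt (t ^ 2 - 4 * ω ^ i₀) with hΔ
    norm_num
    have hc : Δ * Δ⁻¹ = 1 := mul_inv_cancel₀ hΔ0.ne'
    field_simp [hΔ0.ne']
    linear_combination (Δ*E - t*E) * hc
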